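/- arXiv:2411.18488 — 2 statements merged into one kernel-verified Lean document; each statement's English description precedes it below -/
import Mathlib

section
/- Let q ≥ 3 and let L be a line arrangement of k distinct lines in the complex projective plane which is not a pencil (not all lines pass through one point), with t_q(L) ≠ 0 and t_r(L) = 0 for all r > q. Then the Levi graph G(L) contains an induced cycle of length 2i for every integer i with 3 ≤ i ≤ ⌊(k + 9q − 18)/(3q − 5)⌋. -/
open scoped LinearAlgebra.Projectivization
open Projectivization

/-- The complex projective plane. -/
abbrev ProjPoint := ℙ ℂ (Fin 3 → ℂ)

/-- A subset of the projective plane is a (projective) line if it is the zero locus of a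
nonzero linear form. -/
def IsProjLine (L : Set ProjPoint) : Prop :=
  ∃ f : (Fin 3 → ℂ) →ₗ[ℂ] ℂ, f ≠ 0 ∧ L = {p | p.submodule ≤ LinearMap.ker f}

/-- The line in the projective plane with equation `a*x + b*y + c*z = 0`. -/
def projLine (a b c : ℂ) : Set ProjPoint :=
  {p : ProjPoint | ∀ v ∈ p.submodule, a * v 0 + b * v 1 + c * v 2 = 0}

/-- An arrangement of `k` distinct lines in the complex projective plane. -/
structure LineArrangement (k : ℕ) where
  line : Fin k → Set ProjPoint
  isLine : ∀ i, IsProjLine (line i)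
  inj : Function.Injective line

namespace LineArrangement

variable {k : ℕ} (A : LineArrangement k)

/-- The multiplicity of a point: the number of lines of the arrangement passing through it. -/
noncomputable def mult (p : ProjPoint) : ℕ :=
  Set.ncard {i : Fin k | p ∈ A.line i}

/-- The singular points of the arrangement: points lying on at least two of the lines. -/
def sing : Set ProjPoint := {p | 2 ≤ A.mult p}

/-- `A.t r` is the number of points of multiplicity exactly `r`. -/
noncomputable def t (r : ℕ) : ℕ := Set.ncard {p | A.mult p = r}

/-- The Levi graph of a line arrangement: the bipartite graph on `Sing(L) ⊔ L` where a point is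
adjacent to a line iff the point lies on the line. -/
def levi : SimpleGraph (↥A.sing ⊕ Fin k) where
  Adj v w :=
    match v, w with
    | Sum.inl p, Sum.inr i => p.1 ∈ A.line i
    | Sum.inr i, Sum.inl p => p.1 ∈ A.line i
    | _, _ => False
  symm := by
    constructor
    rintro (p | i) (q | j) h <;> simp_all
  loopless := by
    constructor
    rintro (p | i) h <;> simp_all

end LineArrangement

/-- A simple graph has an induced cycle of length `n` if there is an induced subgraph
isomorphic to the cycle graph `C_n`, i.e. a graph embedding of `C_n`. -/
def HasInducedCycle {V : Type*} (G : SimpleGraph V) (n : ℕ) : Prop :=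
  Nonempty (SimpleGraph.cycleGraph n ↪g G)


section Aux

theorem isProjLine_plane {L : Set ProjPoint} (h : IsProjLine L) :
    ∃ W : Submodule ℂ (Fin 3 → ℂ), Module.finrank ℂ W = 2 ∧ L = {p | p.submodule ≤ W} := by
  obtain ⟨f, hf, rfl⟩ := h
  refine ⟨LinearMap.ker f, ?_, rfl⟩
  have hr : Module.finrank ℂ (LinearMap.range f) = 1 := by
    have h1 : Module.finrank ℂ (LinearMap.range f) ≤ 1 := by
      have := Submodule.finrank_le (LinearMap.range f)
      rwa [Module.finrank_self] at this
    have h0 : Module.finrank ℂ (LinearMap.range f) ≠ 0 := by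
      intro h
      rw [Submodule.finrank_eq_zero] at h
      exact hf (LinearMap.range_eq_bot.mp h)
    omega
  have := LinearMap.finrank_range_add_finrank_ker f
  rw [hr, Module.finrank_fin_fun] at this
  omega

/-- Two distinct projective lines meet in exactly one point. -/
theorem projLine_inter {L1 L2 : Set ProjPoint} (h1 : IsProjLine L1) (h2 : IsProjLine L2)
    (hne : L1 ≠ L2) : ∃! p : ProjPoint, p ∈ L1 ∩ L2 := by
  obtain ⟨W1, hW1, rfl⟩ := isProjLine_plane h1
  obtain ⟨W2, hW2, rfl⟩ := isProjLine_plane h2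
  have hWne : W1 ≠ W2 := by rintro rfl; exact hne rfl
  have hsum := Submodule.finrank_sup_add_finrank_inf_eq W1 W2
  have hle3 : Module.finrank ℂ ↥(W1 ⊔ W2) ≤ 3 := by
    have := Submodule.finrank_le (W1 ⊔ W2)
    rwa [Module.finrank_fin_fun] at this
  have hinfle : Module.finrank ℂ ↥(W1 ⊓ W2) ≤ 1 := by
    by_contra hgt
    push_neg at hgt
    have e1 : W1 ⊓ W2 = W1 :=
      Submodule.eq_of_le_of_finrank_le inf_le_left (by omega)
    have e2 : W1 ⊓ W2 = W2 :=
      Submodule.eq_of_le_of_finrank_le inf_le_right (by omega)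
    exact hWne (e1 ▸ e2)
  have hinf : Module.finrank ℂ ↥(W1 ⊓ W2) = 1 := by omega
  refine ⟨Projectivization.mk'' (W1 ⊓ W2) hinf, ⟨?_, ?_⟩, ?_⟩
  · show _ ≤ W1
    rw [Projectivization.submodule_mk'']
    exact inf_le_left
  · show _ ≤ W2
    rw [Projectivization.submodule_mk'']
    exact inf_le_right
  · rintro p ⟨hp1, hp2⟩
    have hple : p.submodule ≤ W1 ⊓ W2 := le_inf hp1 hp2
    have : p.submodule = W1 ⊓ W2 :=
      Submodule.eq_of_le_of_finrank_le hple (by rw [p.finrank_submodule]; omega)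
    apply Projectivization.submodule_injective
    rw [this, Projectivization.submodule_mk'']

namespace LineArrangement

variable {k : ℕ} (A : LineArrangement k)

/-- Uniqueness of the common point of two distinct lines. -/
theorem inter_unique {i j : Fin k} (hij : i ≠ j) {p p' : ProjPoint}
    (h1 : p ∈ A.line i) (h2 : p ∈ A.line j) (h1' : p' ∈ A.line i) (h2' : p' ∈ A.line j) :
    p = p' := by
  have hne : A.line i ≠ A.line j := fun h => hij (A.inj h)
  obtain ⟨z, -, hz⟩ := projLine_inter (A.isLine i) (A.isLine j) hne
  rw [hz p ⟨h1, h2⟩, hz p' ⟨h1', h2'⟩]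

/-- The common point of two lines (junk value if the lines don't meet). -/
noncomputable def meet (i j : Fin k) : ProjPoint :=
  Classical.epsilon (fun p => p ∈ A.line i ∩ A.line j)

theorem meet_mem {i j : Fin k} (hij : i ≠ j) :
    A.meet i j ∈ A.line i ∧ A.meet i j ∈ A.line j := by
  have hne : A.line i ≠ A.line j := fun h => hij (A.inj h)
  obtain ⟨z, hz, -⟩ := projLine_inter (A.isLine i) (A.isLine j) hne
  exact Classical.epsilon_spec (⟨z, hz⟩ : ∃ p, p ∈ A.line i ∩ A.line j)

/-- The finset of lines through a point. -/
noncomputable def linesThrough (p : ProjPoint) : Finset (Fin k) :=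
  (Set.toFinite {i : Fin k | p ∈ A.line i}).toFinset

@[simp] theorem mem_linesThrough {p : ProjPoint} {i : Fin k} :
    i ∈ A.linesThrough p ↔ p ∈ A.line i := by
  simp [linesThrough]

theorem card_linesThrough (p : ProjPoint) : (A.linesThrough p).card = A.mult p :=
  (Set.ncard_eq_toFinset_card _ _).symm

theorem two_le_mult {p : ProjPoint} {i j : Fin k} (hij : i ≠ j)
    (h1 : p ∈ A.line i) (h2 : p ∈ A.line j) : 2 ≤ A.mult p := by
  rw [← A.card_linesThrough p]
  have : ({i, j} : Finset (Fin k)) ⊆ A.linesThrough p := by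
    intro x hx
    rcases Finset.mem_insert.mp hx with rfl | hx
    · simpa using h1
    · rw [Finset.mem_singleton] at hx
      subst hx
      simpa using h2
  calc 2 = ({i, j} : Finset (Fin k)).card := (Finset.card_pair hij).symm
    _ ≤ _ := Finset.card_le_card this

theorem sing_finite : A.sing.Finite := by
  have hsub : A.sing ⊆ ⋃ (i : Fin k), ⋃ (j : Fin k), ⋃ (_ : i ≠ j), (A.line i ∩ A.line j) := by
    intro p hp
    have : 1 < Set.ncard {i : Fin k | p ∈ A.line i} := hp
    rw [Set.one_lt_ncard_iff (Set.toFinite _)] at this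
    obtain ⟨a, b, ha, hb, hab⟩ := this
    simp only [Set.mem_iUnion]
    exact ⟨a, b, hab, ha, hb⟩
  apply Set.Finite.subset _ hsub
  apply Set.finite_iUnion (fun i => Set.finite_iUnion (fun j => Set.finite_iUnion (fun hij => ?_)))
  apply Set.Subsingleton.finite
  intro p hp p' hp'
  exact A.inter_unique hij hp.1 hp.2 hp'.1 hp'.2

theorem mult_le {q : ℕ} (hq : 3 ≤ q) (hr : ∀ r : ℕ, q < r → A.t r = 0) (p : ProjPoint) :
    A.mult p ≤ q := by
  by_contra hgt
  push_neg at hgt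
  have ht := hr _ hgt
  have hfin : {x : ProjPoint | A.mult x = A.mult p}.Finite := by
    apply A.sing_finite.subset
    intro x hx
    have : A.mult x = A.mult p := hx
    show 2 ≤ A.mult x
    omega
  rw [t, Set.ncard_eq_zero hfin] at ht
  exact absurd (ht ▸ rfl : p ∈ ({} : Set ProjPoint)) (by simp)



/-- A "good polygon": a cyclic sequence of lines together with consecutive intersection
points, such that each intersection point avoids all the non-consecutive lines. -/
def IsPoly {k i : ℕ} [NeZero i] (A : LineArrangement k) (σ : Fin i → Fin k)
    (P : Fin i → ProjPoint) : Prop :=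
  Function.Injective σ ∧
  (∀ j, P j ∈ A.line (σ j) ∧ P j ∈ A.line (σ (j + 1))) ∧
  ∀ j m, m ≠ j → m ≠ j + 1 → P j ∉ A.line (σ m)

variable {k i : ℕ} [NeZero i] {A : LineArrangement k} {σ : Fin i → Fin k}
  {P : Fin i → ProjPoint}

theorem fin_one_ne_zero' (hi : 3 ≤ i) : (1 : Fin i) ≠ 0 := by
  intro h
  have hv := congrArg Fin.val h
  rw [Fin.val_one', Fin.val_zero, Nat.mod_eq_of_lt (by omega)] at hv
  omega

theorem fin_two_ne_zero (hi : 3 ≤ i) : (1 : Fin i) + 1 ≠ 0 := by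
  intro h
  have hv := congrArg Fin.val h
  have h1 : ((1 : Fin i) : ℕ) = 1 := by
    rw [Fin.val_one', Nat.mod_eq_of_lt (by omega)]
  have hv2 : (1 + 1) % i = 0 := by simpa [Fin.add_def, h1] using hv
  rw [Nat.mod_eq_of_lt (by omega)] at hv2
  omega

theorem fin_succ_ne (hi : 3 ≤ i) (j : Fin i) : j + 1 ≠ j := by
  intro h
  exact fin_one_ne_zero' hi (add_eq_left.mp h)

theorem fin_no_two_cycle (hi : 3 ≤ i) {a b : Fin i} (h1 : a = b + 1) (h2 : b = a + 1) :
    False := by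
  rw [h2, add_assoc] at h1
  exact fin_two_ne_zero hi (left_eq_add.mp h1)

theorem IsPoly.sigma_succ_ne (hi : 3 ≤ i) (h : A.IsPoly σ P) (j : Fin i) : σ j ≠ σ (j + 1) :=
  fun hc => (fin_succ_ne hi j) (h.1 hc.symm)

theorem IsPoly.mem_sing (hi : 3 ≤ i) (h : A.IsPoly σ P) (j : Fin i) : P j ∈ A.sing :=
  A.two_le_mult (h.sigma_succ_ne hi j) (h.2.1 j).1 (h.2.1 j).2

theorem IsPoly.P_mem_line_iff (hi : 3 ≤ i) (h : A.IsPoly σ P) (a b : Fin i) :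
    P b ∈ A.line (σ a) ↔ (a = b ∨ a = b + 1) := by
  constructor
  · intro hmem
    by_contra hc
    push_neg at hc
    exact h.2.2 b a hc.1 hc.2 hmem
  · rintro (rfl | rfl)
    · exact (h.2.1 _).1
    · exact (h.2.1 _).2

theorem IsPoly.P_inj (hi : 3 ≤ i) (h : A.IsPoly σ P) : Function.Injective P := by
  intro a b hab
  by_contra hne
  have h1 : P a ∈ A.line (σ b) := hab.symm ▸ (h.2.1 b).1
  have h2 : P a ∈ A.line (σ (b + 1)) := hab.symm ▸ (h.2.1 b).2
  rw [h.P_mem_line_iff hi] at h1 h2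
  rcases h1 with rfl | h1
  · exact hne rfl
  rcases h2 with h2 | h2
  · exact fin_no_two_cycle hi h2.symm h1
  · exact hne (add_right_cancel h2).symm

theorem cycle_adj_iff {n : ℕ} [NeZero n] (hn : 2 ≤ n) (u v : Fin n) :
    (SimpleGraph.cycleGraph n).Adj u v ↔ (u = v + 1 ∨ v = u + 1) := by
  haveI : NeZero n := ⟨by omega⟩
  rw [SimpleGraph.cycleGraph_adj']
  have h1 : ((1 : Fin n) : ℕ) = 1 := by
    rw [Fin.val_one', Nat.mod_eq_of_lt (by omega)]
  have key : ∀ a b : Fin n, (((a - b : Fin n) : ℕ) = 1 ↔ a = b + 1) := by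
    intro a b
    rw [show (1 : ℕ) = ((1 : Fin n) : ℕ) from h1.symm, Fin.val_eq_val,
      sub_eq_iff_eq_add, add_comm]
  rw [key, key]

theorem IsPoly.embedding (hi : 3 ≤ i) (h : A.IsPoly σ P) :
    Nonempty (SimpleGraph.cycleGraph (2 * i) ↪g A.levi) := by
  haveI : NeZero (2 * i) := ⟨by omega⟩
  have h2i : ((1 : Fin (2 * i)) : ℕ) = 1 := by
    rw [Fin.val_one', Nat.mod_eq_of_lt (by omega)]
  set e : Fin i → Fin (2 * i) := fun a => ⟨2 * a.val, by omega⟩ with he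
  set o : Fin i → Fin (2 * i) := fun a => ⟨2 * a.val + 1, by have := a.isLt; omega⟩ with ho
  have hoe : ∀ a : Fin i, o a = e a + 1 := by
    intro a
    apply Fin.ext
    have := a.isLt
    rw [Fin.add_def]
    simp only [he, ho, h2i]
    rw [Nat.mod_eq_of_lt (by omega)]
  have heo : ∀ a : Fin i, e (a + 1) = o a + 1 := by
    intro a
    have hai := a.isLt
    have hv1 : ((a + 1 : Fin i) : ℕ) = (a.val + 1) % i := by
      rw [Fin.add_def, Fin.val_one', Nat.mod_eq_of_lt (show 1 < i by omega)]
    have hrhs : ((o a + 1 : Fin (2 * i)) : ℕ) = (2 * a.val + 1 + 1) % (2 * i) := by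
      rw [Fin.add_def]
      simp only [ho, h2i]
    apply Fin.ext
    rw [hrhs]
    show 2 * ((a + 1 : Fin i) : ℕ) = _
    rw [hv1]
    rcases Nat.lt_or_ge (a.val + 1) i with hlt | hge
    · rw [Nat.mod_eq_of_lt hlt, Nat.mod_eq_of_lt (by omega)]
      omega
    · have hai1 : a.val + 1 = i := by omega
      rw [hai1, Nat.mod_self, Nat.mul_zero]
      have h22 : 2 * a.val + 1 + 1 = 2 * i := by omega
      rw [h22, Nat.mod_self]
  have e_inj : Function.Injective e := by
    intro a b hab
    apply Fin.ext
    have := congrArg Fin.val hab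
    simp only [he] at this
    omega
  have o_inj : Function.Injective o := by
    intro a b hab
    apply Fin.ext
    have := congrArg Fin.val hab
    simp only [ho] at this
    omega
  have eo_ne : ∀ a b : Fin i, e a ≠ o b := by
    intro a b hab
    have := congrArg Fin.val hab
    simp only [he, ho] at this
    omega
  have hdecomp : ∀ v : Fin (2 * i), ∃ a : Fin i, v = e a ∨ v = o a := by
    intro v
    have hv := v.isLt
    refine ⟨⟨v.val / 2, by omega⟩, ?_⟩
    rcases Nat.even_or_odd v.val with he' | ho'
    · left
      apply Fin.ext
      simp only [he]
      obtain ⟨c, hc⟩ := he'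
      omega
    · right
      apply Fin.ext
      simp only [ho]
      obtain ⟨c, hc⟩ := ho'
      omega
  set f : Fin (2 * i) → (↥A.sing ⊕ Fin k) := fun v =>
    if hv : v.val % 2 = 0 then Sum.inr (σ ⟨v.val / 2, by have := v.isLt; omega⟩)
    else Sum.inl ⟨P ⟨v.val / 2, by have := v.isLt; omega⟩, h.mem_sing hi _⟩ with hf
  have hfe : ∀ a : Fin i, f (e a) = Sum.inr (σ a) := by
    intro a
    have h2 : (e a).val % 2 = 0 := by show 2 * a.val % 2 = 0; omega
    simp only [hf]
    rw [dif_pos h2]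
    exact congrArg (fun x => Sum.inr (σ x))
      (Fin.ext (show (e a).val / 2 = a.val by show 2 * a.val / 2 = a.val; omega))
  have hfo : ∀ a : Fin i, f (o a) = Sum.inl ⟨P a, h.mem_sing hi a⟩ := by
    intro a
    have h2 : ¬ ((o a).val % 2 = 0) := by show ¬ ((2 * a.val + 1) % 2 = 0); omega
    simp only [hf]
    rw [dif_neg h2]
    exact congrArg Sum.inl (Subtype.ext (congrArg P
      (Fin.ext (show (o a).val / 2 = a.val by show (2 * a.val + 1) / 2 = a.val; omega))))
  refine ⟨⟨⟨f, ?_⟩, ?_⟩⟩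
  · -- injectivity
    intro u v huv
    obtain ⟨a, rfl | rfl⟩ := hdecomp u <;> obtain ⟨b, rfl | rfl⟩ := hdecomp v
    · rw [hfe, hfe] at huv
      rw [h.1 (Sum.inr.inj huv)]
    · rw [hfe, hfo] at huv
      exact absurd huv (by simp)
    · rw [hfo, hfe] at huv
      exact absurd huv (by simp)
    · rw [hfo, hfo] at huv
      have : P a = P b := congrArg Subtype.val (Sum.inl.inj huv)
      rw [h.P_inj hi this]
  · -- adjacency
    intro u v
    show A.levi.Adj (f u) (f v) ↔ (SimpleGraph.cycleGraph (2 * i)).Adj u v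
    rw [cycle_adj_iff (by omega)]
    obtain ⟨a, rfl | rfl⟩ := hdecomp u <;> obtain ⟨b, rfl | rfl⟩ := hdecomp v
    · rw [hfe, hfe]
      constructor
      · intro hadj
        exact absurd hadj (by simp [LineArrangement.levi])
      · rintro (hc | hc)
        · rw [← hoe] at hc
          exact absurd hc (eo_ne a b)
        · rw [← hoe] at hc
          exact absurd hc (eo_ne b a)
    · rw [hfe, hfo]
      have hiff : A.levi.Adj (Sum.inr (σ a)) (Sum.inl ⟨P b, h.mem_sing hi b⟩) ↔
          P b ∈ A.line (σ a) := Iff.rfl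
      rw [hiff, h.P_mem_line_iff hi]
      rw [← heo, ← hoe]
      constructor
      · rintro (h' | h')
        · exact Or.inr (by rw [h'])
        · exact Or.inl (by rw [h'])
      · rintro (h' | h')
        · exact Or.inr (e_inj h')
        · exact Or.inl (o_inj h').symm
    · rw [hfo, hfe]
      have hiff : A.levi.Adj (Sum.inl ⟨P a, h.mem_sing hi a⟩) (Sum.inr (σ b)) ↔
          P a ∈ A.line (σ b) := Iff.rfl
      rw [hiff, h.P_mem_line_iff hi]
      rw [← heo, ← hoe]
      constructor
      · rintro (h' | h')
        · exact Or.inl (by rw [h'])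
        · exact Or.inr (by rw [h'])
      · rintro (h' | h')
        · exact Or.inl (o_inj h').symm
        · exact Or.inr (e_inj h')
    · rw [hfo, hfo]
      constructor
      · intro hadj
        exact absurd hadj (by simp [LineArrangement.levi])
      · rintro (hc | hc)
        · rw [← heo] at hc
          exact absurd hc.symm (eo_ne _ _)
        · rw [← heo] at hc
          exact absurd hc.symm (eo_ne _ _)

theorem fin_val_add_one {n : ℕ} [NeZero n] (hn : 2 ≤ n) (j : Fin n) :
    ((j + 1 : Fin n) : ℕ) = if j.val + 1 = n then 0 else j.val + 1 := by
  rw [Fin.add_def, Fin.val_one', Nat.mod_eq_of_lt (show 1 < n by omega)]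
  by_cases hj : j.val + 1 = n
  · rw [if_pos hj]
    show (j.val + 1) % n = 0
    rw [hj, Nat.mod_self]
  · rw [if_neg hj]
    show (j.val + 1) % n = j.val + 1
    exact Nat.mod_eq_of_lt (by have := j.isLt; omega)

/-- Auxiliary: bound on the number of unchosen lines through a point on two chosen lines. -/
theorem card_linesThrough_sdiff {c : ℕ} (hmax : ∀ p, A.mult p ≤ c + 2)
    {S : Finset (Fin k)} {z : ProjPoint} {a b : Fin k} (hab : a ≠ b)
    (ha : z ∈ A.line a) (hb : z ∈ A.line b) (haS : a ∈ S) (hbS : b ∈ S) :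
    (A.linesThrough z \ S).card ≤ c := by
  have hsub : ({a, b} : Finset (Fin k)) ⊆ A.linesThrough z := by
    intro x hx
    rcases Finset.mem_insert.mp hx with rfl | hx
    · simpa using ha
    · rw [Finset.mem_singleton] at hx
      subst hx
      simpa using hb
  have hsub2 : A.linesThrough z \ S ⊆ A.linesThrough z \ {a, b} := by
    apply Finset.sdiff_subset_sdiff (le_refl _)
    intro x hx
    rcases Finset.mem_insert.mp hx with rfl | hx
    · exact haS
    · rw [Finset.mem_singleton] at hx
      subst hx
      exact hbS
  have h1 : (A.linesThrough z \ ({a, b} : Finset (Fin k))).card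
      = (A.linesThrough z).card - 2 := by
    rw [Finset.card_sdiff_of_subset hsub, Finset.card_pair hab]
  have h2 : (A.linesThrough z).card ≤ c + 2 := by
    rw [A.card_linesThrough]
    exact hmax z
  calc (A.linesThrough z \ S).card ≤ _ := Finset.card_le_card hsub2
    _ = (A.linesThrough z).card - 2 := h1
    _ ≤ c := by omega

set_option maxHeartbeats 2000000 in
/-- The extension step: a good polygon with `m+3` lines extends to one with `m+4` lines. -/
theorem exists_poly_succ {m c : ℕ} (hmax : ∀ p, A.mult p ≤ c + 2)
    (hk : (m + 3) + (3 * m + 3) * c + 1 ≤ k)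
    (σ : Fin (m + 3) → Fin k) (P : Fin (m + 3) → ProjPoint) (h : A.IsPoly σ P) :
    ∃ (σ' : Fin (m + 4) → Fin k) (P' : Fin (m + 4) → ProjPoint), A.IsPoly σ' P' := by
  classical
  set S : Finset (Fin k) := Finset.image σ Finset.univ with hS
  have hcardS : S.card = m + 3 := by
    rw [hS, Finset.card_image_of_injective _ h.1, Finset.card_univ, Fintype.card_fin]
  set Z : Finset ProjPoint :=
    (Finset.image P Finset.univ ∪
      Finset.image (fun t : Fin m => A.meet (σ ⟨m + 2, by omega⟩) (σ ⟨t.val + 1, by omega⟩))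
        Finset.univ) ∪
      Finset.image (fun t : Fin m => A.meet (σ ⟨0, by omega⟩) (σ ⟨t.val + 2, by omega⟩))
        Finset.univ with hZ
  have hcardZ : Z.card ≤ 3 * m + 3 := by
    calc Z.card ≤ _ := Finset.card_union_le _ _
      _ ≤ (Finset.image P Finset.univ).card
            + (Finset.image (fun t : Fin m =>
                A.meet (σ ⟨m + 2, by omega⟩) (σ ⟨t.val + 1, by omega⟩)) Finset.univ).card
            + (Finset.image (fun t : Fin m =>
                A.meet (σ ⟨0, by omega⟩) (σ ⟨t.val + 2, by omega⟩)) Finset.univ).card := by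
        have := Finset.card_union_le (Finset.image P Finset.univ)
          (Finset.image (fun t : Fin m =>
            A.meet (σ ⟨m + 2, by omega⟩) (σ ⟨t.val + 1, by omega⟩)) Finset.univ)
        omega
      _ ≤ (m + 3) + m + m := by
        have h1 := Finset.card_image_le (f := P) (s := Finset.univ)
        have h2 := Finset.card_image_le (f := fun t : Fin m =>
            A.meet (σ ⟨m + 2, by omega⟩) (σ ⟨t.val + 1, by omega⟩)) (s := Finset.univ)
        have h3 := Finset.card_image_le (f := fun t : Fin m =>
            A.meet (σ ⟨0, by omega⟩) (σ ⟨t.val + 2, by omega⟩)) (s := Finset.univ)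
        simp only [Finset.card_univ, Fintype.card_fin] at h1 h2 h3
        omega
      _ ≤ 3 * m + 3 := by omega
  -- every point of Z lies on two distinct lines of S
  have hZ2 : ∀ z ∈ Z, (A.linesThrough z \ S).card ≤ c := by
    intro z hz
    rw [hZ, Finset.mem_union, Finset.mem_union] at hz
    rcases hz with (hz | hz) | hz
    · obtain ⟨j, -, rfl⟩ := Finset.mem_image.mp hz
      exact card_linesThrough_sdiff hmax (h.sigma_succ_ne (by omega) j)
        (h.2.1 j).1 (h.2.1 j).2 (Finset.mem_image_of_mem _ (Finset.mem_univ _))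
        (Finset.mem_image_of_mem _ (Finset.mem_univ _))
    · obtain ⟨t, -, rfl⟩ := Finset.mem_image.mp hz
      have hne : σ (⟨m + 2, by omega⟩ : Fin (m + 3)) ≠ σ ⟨t.val + 1, by omega⟩ := by
        intro hcon
        have h1 : m + 2 = t.val + 1 := congrArg Fin.val (h.1 hcon)
        have h2 := t.isLt
        omega
      obtain ⟨hm1, hm2⟩ := A.meet_mem hne
      exact card_linesThrough_sdiff hmax hne hm1 hm2
        (Finset.mem_image_of_mem _ (Finset.mem_univ _))
        (Finset.mem_image_of_mem _ (Finset.mem_univ _))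
    · obtain ⟨t, -, rfl⟩ := Finset.mem_image.mp hz
      have hne : σ (⟨0, by omega⟩ : Fin (m + 3)) ≠ σ ⟨t.val + 2, by omega⟩ := by
        intro hcon
        have h1 : 0 = t.val + 2 := congrArg Fin.val (h.1 hcon)
        omega
      obtain ⟨hm1, hm2⟩ := A.meet_mem hne
      exact card_linesThrough_sdiff hmax hne hm1 hm2
        (Finset.mem_image_of_mem _ (Finset.mem_univ _))
        (Finset.mem_image_of_mem _ (Finset.mem_univ _))
  set bad : Finset (Fin k) := S ∪ Z.biUnion (fun z => A.linesThrough z \ S) with hbad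
  have hcardbad : bad.card ≤ (m + 3) + (3 * m + 3) * c := by
    calc bad.card ≤ S.card + (Z.biUnion (fun z => A.linesThrough z \ S)).card :=
        Finset.card_union_le _ _
      _ ≤ S.card + ∑ z ∈ Z, (A.linesThrough z \ S).card := by
        have := Finset.card_biUnion_le (s := Z) (t := fun z => A.linesThrough z \ S)
        omega
      _ ≤ (m + 3) + Z.card * c := by
        have := Finset.sum_le_card_nsmul Z (fun z => (A.linesThrough z \ S).card) c hZ2
        simp only [smul_eq_mul] at this
        omega
      _ ≤ (m + 3) + (3 * m + 3) * c := by
        have : Z.card * c ≤ (3 * m + 3) * c := Nat.mul_le_mul_right c hcardZ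
        omega
  -- pick a line outside the bad set
  have hex : ∃ n : Fin k, n ∉ bad := by
    by_contra hcon
    push_neg at hcon
    have : (Finset.univ : Finset (Fin k)) ⊆ bad := fun x _ => hcon x
    have := Finset.card_le_card this
    simp only [Finset.card_univ, Fintype.card_fin] at this
    omega
  obtain ⟨n, hn⟩ := hex
  have hnS : n ∉ S := fun hcon => hn (Finset.mem_union_left _ hcon)
  have hnσ : ∀ j : Fin (m + 3), n ≠ σ j := by
    intro j hcon
    exact hnS (hcon ▸ Finset.mem_image_of_mem σ (Finset.mem_univ j))
  have hnZ : ∀ z ∈ Z, z ∉ A.line n := by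
    intro z hz hcon
    apply hn
    apply Finset.mem_union_right
    apply Finset.mem_biUnion.mpr
    exact ⟨z, hz, Finset.mem_sdiff.mpr ⟨(A.mem_linesThrough).mpr hcon, hnS⟩⟩
  have hPZ : ∀ j : Fin (m + 3), P j ∈ Z := by
    intro j
    rw [hZ]
    exact Finset.mem_union_left _
      (Finset.mem_union_left _ (Finset.mem_image_of_mem _ (Finset.mem_univ j)))
  have hZ2mem : ∀ t : Fin m, A.meet (σ ⟨m + 2, by omega⟩) (σ ⟨t.val + 1, by omega⟩) ∈ Z := by
    intro t
    rw [hZ]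
    exact Finset.mem_union_left _ (Finset.mem_union_right _
      (Finset.mem_image_of_mem _ (Finset.mem_univ t)))
  have hZ3mem : ∀ t : Fin m, A.meet (σ ⟨0, by omega⟩) (σ ⟨t.val + 2, by omega⟩) ∈ Z := by
    intro t
    rw [hZ]
    exact Finset.mem_union_right _ (Finset.mem_image_of_mem _ (Finset.mem_univ t))
  -- the new intersection points
  set a : ProjPoint := A.meet (σ ⟨m + 2, by omega⟩) n with ha
  set b : ProjPoint := A.meet n (σ ⟨0, by omega⟩) with hb
  obtain ⟨ha1, ha2⟩ := A.meet_mem (Ne.symm (hnσ ⟨m + 2, by omega⟩))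
  obtain ⟨hb1, hb2⟩ := A.meet_mem (hnσ ⟨0, by omega⟩)
  -- helper equations
  have hsucc3 : ∀ j : Fin (m + 3), ((j + 1 : Fin (m + 3)) : ℕ)
      = if j.val + 1 = m + 3 then 0 else j.val + 1 := fun j => fin_val_add_one (by omega) j
  have hsucc4 : ∀ j : Fin (m + 4), ((j + 1 : Fin (m + 4)) : ℕ)
      = if j.val + 1 = m + 4 then 0 else j.val + 1 := fun j => fin_val_add_one (by omega) j
  have hadd3 : ∀ (v : ℕ) (hv : v + 1 < m + 3), ((⟨v, by omega⟩ : Fin (m + 3)) + 1)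
      = ⟨v + 1, hv⟩ := by
    intro v hv
    apply Fin.ext
    rw [hsucc3]
    show (if v + 1 = m + 3 then 0 else v + 1) = v + 1
    rw [if_neg (by omega)]
  have hwrap3 : ((⟨m + 2, by omega⟩ : Fin (m + 3)) + 1) = ⟨0, by omega⟩ := by
    apply Fin.ext
    rw [hsucc3]
    show (if m + 2 + 1 = m + 3 then 0 else m + 2 + 1) = 0
    rw [if_pos (by omega)]
  set σ' : Fin (m + 4) → Fin k :=
    fun x => if hx : x.val < m + 3 then σ ⟨x.val, hx⟩ else n with hσ'
  set P' : Fin (m + 4) → ProjPoint :=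
    fun x => if hx : x.val < m + 2 then P ⟨x.val, by omega⟩
      else if x.val = m + 2 then a else b with hP'
  have hσ'lt : ∀ (x : Fin (m + 4)) (hx : x.val < m + 3), σ' x = σ ⟨x.val, hx⟩ := by
    intro x hx
    simp only [hσ']
    rw [dif_pos hx]
  have hσ'n : ∀ (x : Fin (m + 4)), ¬ (x.val < m + 3) → σ' x = n := by
    intro x hx
    simp only [hσ']
    rw [dif_neg hx]
  have line_congr : ∀ (x y : Fin (m + 3)), x.val = y.val → ∀ {z : ProjPoint},
      z ∈ A.line (σ x) → z ∈ A.line (σ y) := by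
    intro x y hxy z hz
    rwa [show y = x from Fin.ext hxy.symm]
  have hP'lt : ∀ (x : Fin (m + 4)) (hx : x.val < m + 2), P' x = P ⟨x.val, by omega⟩ := by
    intro x hx
    simp only [hP']
    rw [dif_pos hx]
  have hP'a : ∀ (x : Fin (m + 4)), x.val = m + 2 → P' x = a := by
    intro x hx
    simp only [hP']
    rw [dif_neg (by omega), if_pos hx]
  have hP'b : ∀ (x : Fin (m + 4)), x.val = m + 3 → P' x = b := by
    intro x hx
    simp only [hP']
    rw [dif_neg (by omega), if_neg (by omega)]
  refine ⟨σ', P', ?_, ?_, ?_⟩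
  · -- injectivity of σ'
    intro x y hxy
    by_cases hx : x.val < m + 3 <;> by_cases hy : y.val < m + 3
    · rw [hσ'lt x hx, hσ'lt y hy] at hxy
      have hv := congrArg Fin.val (h.1 hxy)
      exact Fin.ext hv
    · rw [hσ'lt x hx, hσ'n y hy] at hxy
      exact absurd hxy.symm (hnσ _)
    · rw [hσ'n x hx, hσ'lt y hy] at hxy
      exact absurd hxy (hnσ _)
    · apply Fin.ext
      have := x.isLt
      have := y.isLt
      omega
  · -- incidence conditions
    intro j
    have hj4 := j.isLt
    by_cases h1 : j.val < m + 2
    · have hj1 : ((j + 1 : Fin (m + 4)) : ℕ) = j.val + 1 := by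
        rw [hsucc4, if_neg (by omega)]
      constructor
      · rw [hP'lt j h1, hσ'lt j (by omega)]
        exact (h.2.1 ⟨j.val, by omega⟩).1
      · rw [hP'lt j h1, hσ'lt (j + 1) (by omega : (j + 1 : Fin (m + 4)).val < m + 3)]
        have hthis := (h.2.1 ⟨j.val, by omega⟩).2
        rw [hadd3 j.val (by omega)] at hthis
        exact line_congr _ _ (show j.val + 1 = ((j + 1 : Fin (m + 4)) : ℕ) by omega) hthis
    · by_cases h2 : j.val = m + 2
      · have hj1 : ((j + 1 : Fin (m + 4)) : ℕ) = m + 3 := by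
          rw [hsucc4, if_neg (by omega)]
          omega
        constructor
        · rw [hP'a j h2, hσ'lt j (by omega)]
          exact line_congr _ _ (show m + 2 = j.val by omega) ha1
        · rw [hP'a j h2, hσ'n (j + 1) (by omega)]
          exact ha2
      · have h3 : j.val = m + 3 := by omega
        have hj1 : ((j + 1 : Fin (m + 4)) : ℕ) = 0 := by
          rw [hsucc4, if_pos (by omega)]
        constructor
        · rw [hP'b j h3, hσ'n j (by omega)]
          exact hb1
        · rw [hP'b j h3, hσ'lt (j + 1) (by omega)]
          exact line_congr _ _ (show 0 = ((j + 1 : Fin (m + 4)) : ℕ) by omega) hb2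
  · -- induced conditions
    intro j m' hm1 hm2
    have hj4 := j.isLt
    have hm4 := m'.isLt
    have hmj : m'.val ≠ j.val := fun hc => hm1 (Fin.ext hc)
    by_cases h1 : j.val < m + 2
    · have hj1 : ((j + 1 : Fin (m + 4)) : ℕ) = j.val + 1 := by
        rw [hsucc4, if_neg (by omega)]
      have hmj1 : m'.val ≠ j.val + 1 := by
        intro hc
        exact hm2 (Fin.ext (by rw [hj1]; exact hc))
      rw [hP'lt j h1]
      by_cases hm3 : m'.val < m + 3
      · rw [hσ'lt m' hm3]
        apply h.2.2 ⟨j.val, by omega⟩ ⟨m'.val, hm3⟩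
        · intro hc
          have hcv := congrArg Fin.val hc
          exact hmj hcv
        · rw [hadd3 j.val (by omega)]
          intro hc
          have hcv := congrArg Fin.val hc
          exact hmj1 hcv
      · rw [hσ'n m' hm3]
        exact hnZ _ (hPZ ⟨j.val, by omega⟩)
    · by_cases h2 : j.val = m + 2
      · -- P' j = a
        have hj1 : ((j + 1 : Fin (m + 4)) : ℕ) = m + 3 := by
          rw [hsucc4, if_neg (by omega)]
          omega
        have hm5 : m'.val ≠ m + 3 := by
          intro hc
          exact hm2 (Fin.ext (by rw [hj1]; exact hc))
        have hm6 : m'.val ≤ m + 1 := by omega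
        rw [hP'a j h2, hσ'lt m' (by omega)]
        intro hcon
        -- find a point z of Z on both lines
        have hzex : ∃ z ∈ Z, z ∈ A.line (σ ⟨m + 2, by omega⟩) ∧ z ∈ A.line (σ ⟨m'.val, by omega⟩) := by
          by_cases hv0 : m'.val = 0
          · refine ⟨P ⟨m + 2, by omega⟩, hPZ _, (h.2.1 ⟨m + 2, by omega⟩).1, ?_⟩
            have hthis := (h.2.1 ⟨m + 2, by omega⟩).2
            rw [hwrap3] at hthis
            exact line_congr _ _ (show 0 = m'.val by omega) hthis
          · by_cases hvm1 : m'.val = m + 1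
            · refine ⟨P ⟨m + 1, by omega⟩, hPZ _, ?_, ?_⟩
              · have := (h.2.1 ⟨m + 1, by omega⟩).2
                rw [hadd3 (m + 1) (by omega)] at this
                exact this
              · exact line_congr _ _ (show m + 1 = m'.val by omega) (h.2.1 ⟨m + 1, by omega⟩).1
            · -- 1 ≤ m'.val ≤ m
              have hne : σ (⟨m + 2, by omega⟩ : Fin (m + 3)) ≠ σ ⟨m'.val, by omega⟩ := by
                intro hc
                have := congrArg Fin.val (h.1 hc)
                simp only at this
                omega
              have hmem := hZ2mem ⟨m'.val - 1, by omega⟩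
              have hvv : (⟨(⟨m'.val - 1, by omega⟩ : Fin m).val + 1, by omega⟩ : Fin (m + 3))
                  = (⟨m'.val, by omega⟩ : Fin (m + 3)) :=
                Fin.ext (show (m'.val - 1) + 1 = m'.val by omega)
              rw [hvv] at hmem
              exact ⟨_, hmem, (A.meet_mem hne).1, (A.meet_mem hne).2⟩
        obtain ⟨z, hzZ, hz1, hz2⟩ := hzex
        have hne2 : σ (⟨m + 2, by omega⟩ : Fin (m + 3)) ≠ σ ⟨m'.val, by omega⟩ := by
          intro hc
          have := congrArg Fin.val (h.1 hc)
          simp only at this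
          omega
        have haz : a = z := A.inter_unique hne2 ha1 hcon hz1 hz2
        exact hnZ z hzZ (haz ▸ ha2)
      · -- P' j = b
        have h3 : j.val = m + 3 := by omega
        have hj1 : ((j + 1 : Fin (m + 4)) : ℕ) = 0 := by
          rw [hsucc4, if_pos (by omega)]
        have hm5 : m'.val ≠ m + 3 := by omega
        have hm0 : m'.val ≠ 0 := by
          intro hc
          exact hm2 (Fin.ext (by rw [hj1]; exact hc))
        rw [hP'b j h3, hσ'lt m' (by omega)]
        intro hcon
        have hzex : ∃ z ∈ Z, z ∈ A.line (σ ⟨0, by omega⟩) ∧ z ∈ A.line (σ ⟨m'.val, by omega⟩) := by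
          by_cases hv1 : m'.val = 1
          · refine ⟨P ⟨0, by omega⟩, hPZ _, (h.2.1 ⟨0, by omega⟩).1, ?_⟩
            have hthis := (h.2.1 ⟨0, by omega⟩).2
            rw [hadd3 0 (by omega)] at hthis
            exact line_congr _ _ (show 0 + 1 = m'.val by omega) hthis
          · by_cases hvm2 : m'.val = m + 2
            · refine ⟨P ⟨m + 2, by omega⟩, hPZ _, ?_, ?_⟩
              · have := (h.2.1 ⟨m + 2, by omega⟩).2
                rw [hwrap3] at this
                exact this
              · exact line_congr _ _ (show m + 2 = m'.val by omega) (h.2.1 ⟨m + 2, by omega⟩).1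
            · -- 2 ≤ m'.val ≤ m + 1
              have hne : σ (⟨0, by omega⟩ : Fin (m + 3)) ≠ σ ⟨m'.val, by omega⟩ := by
                intro hc
                have := congrArg Fin.val (h.1 hc)
                simp only at this
                omega
              have hmem := hZ3mem ⟨m'.val - 2, by omega⟩
              have hvv : (⟨(⟨m'.val - 2, by omega⟩ : Fin m).val + 2, by omega⟩ : Fin (m + 3))
                  = (⟨m'.val, by omega⟩ : Fin (m + 3)) :=
                Fin.ext (show (m'.val - 2) + 2 = m'.val by omega)
              rw [hvv] at hmem
              exact ⟨_, hmem, (A.meet_mem hne).1, (A.meet_mem hne).2⟩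
        obtain ⟨z, hzZ, hz1, hz2⟩ := hzex
        have hne2 : σ (⟨0, by omega⟩ : Fin (m + 3)) ≠ σ ⟨m'.val, by omega⟩ := by
          intro hc
          have := congrArg Fin.val (h.1 hc)
          simp only at this
          omega
        have hbz : b = z := A.inter_unique hne2 hb2 hcon hz1 hz2
        exact hnZ z hzZ (hbz ▸ hb1)

theorem exists_base_poly {k : ℕ} (A : LineArrangement k) {p : ProjPoint} {i0 j0 m0 : Fin k}
    (hij : i0 ≠ j0) (hpi : p ∈ A.line i0) (hpj : p ∈ A.line j0) (hpm : p ∉ A.line m0) :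
    ∃ (σ : Fin 3 → Fin k) (P : Fin 3 → ProjPoint), A.IsPoly σ P := by
  have hmi : m0 ≠ i0 := fun h => hpm (by rw [h]; exact hpi)
  have hmj : m0 ≠ j0 := fun h => hpm (by rw [h]; exact hpj)
  obtain ⟨hq1, hq2⟩ := A.meet_mem hmj.symm
  obtain ⟨hr1, hr2⟩ := A.meet_mem hmi
  have hq_ne : A.meet j0 m0 ∉ A.line i0 := by
    intro hcon
    have heq : A.meet j0 m0 = p := A.inter_unique hij hcon hq1 hpi hpj
    exact hpm (heq ▸ hq2)
  have hr_ne : A.meet m0 i0 ∉ A.line j0 := by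
    intro hcon
    have heq : A.meet m0 i0 = p := A.inter_unique hij hr2 hcon hpi hpj
    exact hpm (heq ▸ hr1)
  refine ⟨fun j => if j.val = 0 then i0 else if j.val = 1 then j0 else m0,
    fun j => if j.val = 0 then p else if j.val = 1 then A.meet j0 m0 else A.meet m0 i0,
    ?_, ?_, ?_⟩
  · intro x y hxy
    fin_cases x <;> fin_cases y <;> simp_all
  · intro j
    fin_cases j <;> constructor <;> simp_all
  · intro j m' h1 h2
    fin_cases j <;> fin_cases m' <;> simp_all

theorem exists_poly_all {k c : ℕ} (A : LineArrangement k) (hmax : ∀ p, A.mult p ≤ c + 2)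
    (hbase : ∃ (σ : Fin 3 → Fin k) (P : Fin 3 → ProjPoint), A.IsPoly σ P) :
    ∀ m : ℕ, (3 * c + 1) * (m + 3) ≤ k + 9 * c →
      ∃ (σ : Fin (m + 3) → Fin k) (P : Fin (m + 3) → ProjPoint), A.IsPoly σ P := by
  intro m
  induction m with
  | zero => exact fun _ => hbase
  | succ n ih =>
    intro hk
    have hk' : (3 * c + 1) * (n + 3) ≤ k + 9 * c :=
      le_trans (Nat.mul_le_mul_left _ (by omega)) hk
    obtain ⟨σ, P, hP⟩ := ih hk'
    have e1 : (3 * c + 1) * (n + 1 + 3) = (n + 3) + (3 * n + 3) * c + 1 + 9 * c := by ring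
    rw [e1] at hk
    have hkk : (n + 3) + (3 * n + 3) * c + 1 ≤ k := by
      exact Nat.add_le_add_iff_right.mp hk
    exact A.exists_poly_succ hmax hkk σ P hP


end LineArrangement

end Aux

/-- `q ≥ 3`, `L` not a pencil, `t_q ≠ 0` and `t_r = 0` for `r > q`: the Levi
graph has an induced cycle of length `2i` for every `3 ≤ i ≤ ⌊(k + 9q - 18)/(3q - 5)⌋`. -/
theorem inducedCycles_tq_max (k q : ℕ) (hq : 3 ≤ q)
    (A : LineArrangement k)
    (hpencil : ¬ ∃ c : ProjPoint, ∀ i : Fin k, c ∈ A.line i)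
    (htq : A.t q ≠ 0) (hr : ∀ r : ℕ, q < r → A.t r = 0) :
    ∀ i : ℕ, 3 ≤ i → i ≤ (k + 9 * q - 18) / (3 * q - 5) →
      HasInducedCycle A.levi (2 * i) := by
  obtain ⟨c, rfl⟩ : ∃ c, q = c + 2 := ⟨q - 2, by omega⟩
  have hc : 1 ≤ c := by omega
  have hmax : ∀ p, A.mult p ≤ c + 2 := A.mult_le hq hr
  have hpex : {p : ProjPoint | A.mult p = c + 2}.Nonempty :=
    Set.nonempty_of_ncard_ne_zero htq
  obtain ⟨p, hp⟩ := hpex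
  have hp' : A.mult p = c + 2 := hp
  have h2 : 1 < Set.ncard {i : Fin k | p ∈ A.line i} := by
    show 1 < A.mult p
    omega
  rw [Set.one_lt_ncard_iff (Set.toFinite _)] at h2
  obtain ⟨i0, j0, hi0, hj0, hij⟩ := h2
  push_neg at hpencil
  obtain ⟨m0, hm0⟩ := hpencil p
  have hbase := A.exists_base_poly hij hi0 hj0 hm0
  intro i hi3 hdiv
  obtain ⟨m, rfl⟩ : ∃ m, i = m + 3 := ⟨i - 3, by omega⟩
  have hq5 : 0 < 3 * (c + 2) - 5 := by omega
  have hmul : (m + 3) * (3 * (c + 2) - 5) ≤ k + 9 * (c + 2) - 18 :=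
    (Nat.le_div_iff_mul_le hq5).mp hdiv
  have hco : (3 * c + 1) * (m + 3) ≤ k + 9 * c := by
    have e1 : 3 * (c + 2) - 5 = 3 * c + 1 := by omega
    have e2 : k + 9 * (c + 2) - 18 = k + 9 * c := by omega
    rw [e1, e2] at hmul
    rw [mul_comm]
    exact hmul
  obtain ⟨σ, P, hpoly⟩ := A.exists_poly_all hmax hbase m hco
  exact hpoly.embedding (by omega)
end

section
/- Let L be the line arrangement in the complex projective plane consisting of the six lines x = 0, y = 0, z = 0, x − y = 0, x − z = 0 and y − z = 0 (in homogeneous coordinates [x:y:z]). Then the Levi graph G(L) contains an induced cycle of length 8 and contains no induced cycle of length greater than 8; that is, the longest induced cycle of G(L) has length 8. -/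
open scoped LinearAlgebra.Projectivization
open Projectivization

lemma mem_projLine_mk {a b c : ℂ} {v : Fin 3 → ℂ} (hv : v ≠ 0) :
    (Projectivization.mk ℂ v hv ∈ projLine a b c) ↔ a * v 0 + b * v 1 + c * v 2 = 0 := by
  constructor
  · intro h
    exact h v (by rw [submodule_mk]; exact Submodule.mem_span_singleton_self v)
  · intro h w hw
    rw [submodule_mk, Submodule.mem_span_singleton] at hw
    obtain ⟨t, rfl⟩ := hw
    simp only [Pi.smul_apply, smul_eq_mul]
    linear_combination t * h

lemma cons_val_five {α : Type*} {m : ℕ} (x : α) (u : Fin (m+5) → α) :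
    Matrix.vecCons x u 5 = Matrix.vecHead (Matrix.vecTail (Matrix.vecTail (Matrix.vecTail (Matrix.vecTail u)))) := rfl

lemma cons_val_six {α : Type*} {m : ℕ} (x : α) (u : Fin (m+6) → α) :
    Matrix.vecCons x u 6 = Matrix.vecHead (Matrix.vecTail (Matrix.vecTail (Matrix.vecTail (Matrix.vecTail (Matrix.vecTail u))))) := rfl

def SV : Fin 7 → Fin 3 → ℂ :=
  ![![1,0,0], ![0,1,0], ![0,0,1], ![1,1,1], ![1,1,0], ![1,0,1], ![0,1,1]]

lemma SV_ne_zero (j : Fin 7) : SV j ≠ 0 := by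
  intro h
  have h0 := congrFun h 0
  have h1 := congrFun h 1
  have h2 := congrFun h 2
  fin_cases j <;> simp [SV, cons_val_five, cons_val_six] at h0 h1 h2

noncomputable def SP : Fin 7 → ProjPoint := fun j => Projectivization.mk ℂ (SV j) (SV_ne_zero j)

def SL : Fin 6 → Set ProjPoint :=
  ![projLine 1 0 0, projLine 0 1 0, projLine 0 0 1,
    projLine 1 (-1) 0, projLine 1 0 (-1), projLine 0 1 (-1)]

def IM : Fin 7 → Fin 6 → Bool :=
  ![![false,true,true,false,false,true],
    ![true,false,true,false,true,false],
    ![true,true,false,true,false,false],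
    ![false,false,false,true,true,true],
    ![false,false,true,true,false,false],
    ![false,true,false,false,true,false],
    ![true,false,false,false,false,true]]

lemma mem_iff (j : Fin 7) (i : Fin 6) : SP j ∈ SL i ↔ IM j i = true := by
  fin_cases j <;> fin_cases i <;>
    simp [SP, SL, SV, IM, mem_projLine_mk, cons_val_five, cons_val_six, Matrix.vecHead, Matrix.vecTail]

set_option maxHeartbeats 4000000 in
lemma two_lines (i i' : Fin 6) (hne : i ≠ i') (p : ProjPoint)
    (hp : p ∈ SL i) (hp' : p ∈ SL i') : ∃ j, SP j = p := by
  induction p using Projectivization.ind with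
  | h v hv =>
  fin_cases i <;> fin_cases i' <;>
    simp [SL, cons_val_five, cons_val_six, Matrix.vecHead, Matrix.vecTail,
      mem_projLine_mk] at hp hp' <;>
  first
    | exact absurd rfl hne
    | (refine ⟨0, ((Projectivization.mk_eq_mk_iff' ℂ v (SV 0) hv (SV_ne_zero 0)).2 ⟨v 0, ?_⟩).symm⟩; funext k; fin_cases k <;> simp [SV, cons_val_five, cons_val_six, Matrix.vecHead, Matrix.vecTail] <;> (first | ring1 | linear_combination hp | linear_combination -hp | linear_combination hp' | linear_combination -hp' | linear_combination hp+hp' | linear_combination hp-hp' | linear_combination hp'-hp | linear_combination -hp-hp'))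
    | (refine ⟨1, ((Projectivization.mk_eq_mk_iff' ℂ v (SV 1) hv (SV_ne_zero 1)).2 ⟨v 1, ?_⟩).symm⟩; funext k; fin_cases k <;> simp [SV, cons_val_five, cons_val_six, Matrix.vecHead, Matrix.vecTail] <;> (first | ring1 | linear_combination hp | linear_combination -hp | linear_combination hp' | linear_combination -hp' | linear_combination hp+hp' | linear_combination hp-hp' | linear_combination hp'-hp | linear_combination -hp-hp'))
    | (refine ⟨2, ((Projectivization.mk_eq_mk_iff' ℂ v (SV 2) hv (SV_ne_zero 2)).2 ⟨v 2, ?_⟩).symm⟩; funext k; fin_cases k <;> simp [SV, cons_val_five, cons_val_six, Matrix.vecHead, Matrix.vecTail] <;> (first | ring1 | linear_combination hp | linear_combination -hp | linear_combination hp' | linear_combination -hp' | linear_combination hp+hp' | linear_combination hp-hp' | linear_combination hp'-hp | linear_combination -hp-hp'))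
    | (refine ⟨3, ((Projectivization.mk_eq_mk_iff' ℂ v (SV 3) hv (SV_ne_zero 3)).2 ⟨v 0, ?_⟩).symm⟩; funext k; fin_cases k <;> simp [SV, cons_val_five, cons_val_six, Matrix.vecHead, Matrix.vecTail] <;> (first | ring1 | linear_combination hp | linear_combination -hp | linear_combination hp' | linear_combination -hp' | linear_combination hp+hp' | linear_combination hp-hp' | linear_combination hp'-hp | linear_combination -hp-hp'))
    | (refine ⟨4, ((Projectivization.mk_eq_mk_iff' ℂ v (SV 4) hv (SV_ne_zero 4)).2 ⟨v 0, ?_⟩).symm⟩; funext k; fin_cases k <;> simp [SV, cons_val_five, cons_val_six, Matrix.vecHead, Matrix.vecTail] <;> (first | ring1 | linear_combination hp | linear_combination -hp | linear_combination hp' | linear_combination -hp' | linear_combination hp+hp' | linear_combination hp-hp' | linear_combination hp'-hp | linear_combination -hp-hp'))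
    | (refine ⟨5, ((Projectivization.mk_eq_mk_iff' ℂ v (SV 5) hv (SV_ne_zero 5)).2 ⟨v 0, ?_⟩).symm⟩; funext k; fin_cases k <;> simp [SV, cons_val_five, cons_val_six, Matrix.vecHead, Matrix.vecTail] <;> (first | ring1 | linear_combination hp | linear_combination -hp | linear_combination hp' | linear_combination -hp' | linear_combination hp+hp' | linear_combination hp-hp' | linear_combination hp'-hp | linear_combination -hp-hp'))
    | (refine ⟨6, ((Projectivization.mk_eq_mk_iff' ℂ v (SV 6) hv (SV_ne_zero 6)).2 ⟨v 1, ?_⟩).symm⟩; funext k; fin_cases k <;> simp [SV, cons_val_five, cons_val_six, Matrix.vecHead, Matrix.vecTail] <;> (first | ring1 | linear_combination hp | linear_combination -hp | linear_combination hp' | linear_combination -hp' | linear_combination hp+hp' | linear_combination hp-hp' | linear_combination hp'-hp | linear_combination -hp-hp'))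

def adjB : (Fin 7 ⊕ Fin 6) → (Fin 7 ⊕ Fin 6) → Bool
  | .inl j, .inr i => IM j i
  | .inr i, .inl j => IM j i
  | _, _ => false

def G6 : SimpleGraph (Fin 7 ⊕ Fin 6) where
  Adj v w := adjB v w = true
  symm := by constructor; decide
  loopless := by constructor; decide

instance : DecidableRel G6.Adj := fun v w => inferInstanceAs (Decidable (_ = true))

set_option maxHeartbeats 4000000 in
set_option maxRecDepth 20000 in
lemma key1012 : ∀ P : Finset (Fin 7), ∀ L : Finset (Fin 6),
    (P.card + L.card = 10 ∨ P.card + L.card = 12) →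
    (∀ j ∈ P, (L.filter (fun i => IM j i)).card = 2) →
    (∀ i ∈ L, (P.filter (fun j => IM j i)).card = 2) → False := by decide

lemma filter_adj_inl (S : Finset (Fin 7 ⊕ Fin 6)) (j : Fin 7) :
    S.filter (G6.Adj (Sum.inl j)) = (S.toRight.filter (fun i => IM j i)).map ⟨Sum.inr, Sum.inr_injective⟩ := by
  ext w
  cases w with
  | inl j' => simp only [Finset.mem_filter]; simp [G6, adjB]
  | inr i => simp only [Finset.mem_filter]; simp [G6, adjB]

lemma filter_adj_inr (S : Finset (Fin 7 ⊕ Fin 6)) (i : Fin 6) :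
    S.filter (G6.Adj (Sum.inr i)) = (S.toLeft.filter (fun j => IM j i)).map ⟨Sum.inl, Sum.inl_injective⟩ := by
  ext w
  cases w with
  | inl j => simp only [Finset.mem_filter]; simp [G6, adjB]
  | inr i' => simp only [Finset.mem_filter]; simp [G6, adjB]

lemma no1012 (S : Finset (Fin 7 ⊕ Fin 6)) (hcard : S.card = 10 ∨ S.card = 12)
    (hdeg : ∀ v ∈ S, (S.filter (G6.Adj v)).card = 2) : False := by
  apply key1012 S.toLeft S.toRight
  · rwa [Finset.card_toLeft_add_card_toRight]
  · intro j hj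
    have := hdeg (Sum.inl j) (Finset.mem_toLeft.1 hj)
    rwa [filter_adj_inl, Finset.card_map] at this
  · intro i hi
    have := hdeg (Sum.inr i) (Finset.mem_toRight.1 hi)
    rwa [filter_adj_inr, Finset.card_map] at this

lemma bridge {n : ℕ} (hn : 3 ≤ n) (f : SimpleGraph.cycleGraph n ↪g G6) :
    ∃ S : Finset (Fin 7 ⊕ Fin 6), S.card = n ∧ ∀ v ∈ S, (S.filter (G6.Adj v)).card = 2 := by
  obtain ⟨m, rfl⟩ : ∃ m, n = m + 3 := ⟨n - 3, by omega⟩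
  refine ⟨Finset.univ.image f, ?_, ?_⟩
  · rw [Finset.card_image_of_injective _ f.injective, Finset.card_univ, Fintype.card_fin]
  · intro v hv
    obtain ⟨i, -, rfl⟩ := Finset.mem_image.1 hv
    have heq : (Finset.univ.image f).filter (G6.Adj (f i)) =
        ((SimpleGraph.cycleGraph (m+3)).neighborFinset i).image f := by
      ext w
      simp only [Finset.mem_filter, Finset.mem_image, Finset.mem_univ, true_and,
        SimpleGraph.mem_neighborFinset]
      constructor
      · rintro ⟨⟨j, rfl⟩, hadj⟩; exact ⟨j, f.map_rel_iff.1 hadj, rfl⟩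
      · rintro ⟨j, hadj, rfl⟩; exact ⟨⟨j, rfl⟩, f.map_rel_iff.2 hadj⟩
    rw [heq, Finset.card_image_of_injective _ f.injective]
    exact SimpleGraph.cycleGraph_degree_three_le

open Fin.NatCast Fin.CommRing in
lemma parity {m : ℕ} (f : SimpleGraph.cycleGraph (m + 2) ↪g G6) : (m + 2) % 2 = 0 := by
  set par : (Fin 7 ⊕ Fin 6) → ZMod 2 := Sum.elim (fun _ => 0) (fun _ => 1) with hpar
  have step : ∀ v w, G6.Adj v w → par w = par v + 1 := by decide
  have adj : ∀ i : Fin (m + 2), (SimpleGraph.cycleGraph (m + 2)).Adj i (i + 1) := by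
    intro i
    rw [SimpleGraph.cycleGraph_adj]
    right
    ring
  have main : ∀ k : ℕ, par (f ((k : Fin (m + 2)))) = par (f 0) + k := by
    intro k
    induction k with
    | zero => simp
    | succ k ih =>
      have h := step _ _ (f.map_rel_iff.2 (adj (k : Fin (m + 2))))
      rw [show ((k + 1 : ℕ) : Fin (m + 2)) = (k : Fin (m + 2)) + 1 by push_cast; ring, h, ih]
      push_cast
      ring
  have h0 := main (m + 2)
  rw [Fin.natCast_self] at h0
  have : ((m + 2 : ℕ) : ZMod 2) = 0 := by
    have h1 : par (f 0) + ((m + 2 : ℕ) : ZMod 2) = par (f 0) + 0 := by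
      rw [add_zero]; exact h0.symm
    exact add_left_cancel h1
  have hdvd : 2 ∣ (m + 2) := by
    rwa [ZMod.natCast_eq_zero_iff] at this
  omega

def f8 : Fin 8 → (Fin 7 ⊕ Fin 6) :=
  ![Sum.inl 4, Sum.inr 2, Sum.inl 0, Sum.inr 1, Sum.inl 5, Sum.inr 4, Sum.inl 3, Sum.inr 3]

def emb8 : SimpleGraph.cycleGraph 8 ↪g G6 where
  toFun := f8
  inj' := by decide
  map_rel_iff' := by
    intro a b
    have h : ∀ a b : Fin 8, (G6.Adj (f8 a) (f8 b) ↔ (SimpleGraph.cycleGraph 8).Adj a b) := by decide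
    exact h a b

lemma card13 {n : ℕ} (f : SimpleGraph.cycleGraph n ↪g G6) : n ≤ 13 := by
  have := Fintype.card_le_of_embedding f.toEmbedding
  simpa using this


lemma SP_inj : Function.Injective SP := by
  have key : ∀ j j' : Fin 7, (∀ i, (IM j i = true) ↔ (IM j' i = true)) → j = j' := by decide
  intro j j' h
  apply key
  intro i
  rw [← mem_iff, ← mem_iff, h]

lemma range_SL : Set.range SL =
    {projLine 1 0 0, projLine 0 1 0, projLine 0 0 1,
     projLine 1 (-1) 0, projLine 1 0 (-1), projLine 0 1 (-1)} := by
  ext x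
  constructor
  · rintro ⟨i, rfl⟩
    fin_cases i <;> simp [SL, cons_val_five, cons_val_six, Matrix.vecHead, Matrix.vecTail]
  · intro hx
    rcases hx with rfl | rfl | rfl | rfl | rfl | rfl
    exacts [⟨0, rfl⟩, ⟨1, rfl⟩, ⟨2, rfl⟩, ⟨3, rfl⟩, ⟨4, rfl⟩, ⟨5, rfl⟩]

lemma hge2 : ∀ j : Fin 7, 2 ≤ (Finset.univ.filter fun i => IM j i = true).card := by decide

/-- the arrangement of the six lines `x = 0`, `y = 0`, `z = 0`, `x - y = 0`,
`x - z = 0`, `y - z = 0`: its Levi graph has an induced cycle of length `8` and no longer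
induced cycle. -/
theorem six_lines_longest_inducedCycle (A : LineArrangement 6)
    (hA : Set.range A.line =
      {projLine 1 0 0, projLine 0 1 0, projLine 0 0 1,
       projLine 1 (-1) 0, projLine 1 0 (-1), projLine 0 1 (-1)}) :
    HasInducedCycle A.levi 8 ∧ ∀ n : ℕ, 8 < n → ¬ HasInducedCycle A.levi n := by
  have hA' : Set.range A.line = Set.range SL := by rw [hA, range_SL]
  -- the permutation matching A.line with SL
  have h1 : ∀ i, ∃ j, SL j = A.line i := by
    intro i
    have : A.line i ∈ Set.range SL := hA' ▸ Set.mem_range_self i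
    obtain ⟨j, hj⟩ := this
    exact ⟨j, hj⟩
  choose σ hσ0 using h1
  have hσ : ∀ i, A.line i = SL (σ i) := fun i => (hσ0 i).symm
  have hσinj : Function.Injective σ := by
    intro i i' h
    apply A.inj
    rw [hσ i, hσ i', h]
  have hσbij : Function.Bijective σ := (Finite.injective_iff_bijective).1 hσinj
  -- multiplicity in terms of SL
  have multEq : ∀ p, A.mult p = {j | p ∈ SL j}.ncard := by
    intro p
    have himg : σ '' {i | p ∈ A.line i} = {j | p ∈ SL j} := by
      ext j
      constructor
      · rintro ⟨i, hi, rfl⟩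
        show p ∈ SL (σ i)
        rw [← hσ i]
        exact hi
      · intro hj
        obtain ⟨i, rfl⟩ := hσbij.2 j
        exact ⟨i, by rw [Set.mem_setOf_eq, hσ i]; exact hj, rfl⟩
    show Set.ncard {i | p ∈ A.line i} = _
    rw [← himg]
    exact (Set.ncard_image_of_injective _ hσbij.1).symm
  have hSPcount : ∀ j : Fin 7, {i | SP j ∈ SL i} = ↑(Finset.univ.filter fun i => IM j i = true) := by
    intro j
    ext i
    simp [mem_iff]
  -- the singular points
  have sing_eq : A.sing = Set.range SP := by
    ext p
    constructor
    · intro hp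
      have h2 : 2 ≤ {j | p ∈ SL j}.ncard := by
        rw [← multEq p]
        exact hp
      have h1' : 1 < {j | p ∈ SL j}.ncard := h2
      rw [Set.one_lt_ncard (Set.toFinite _)] at h1'
      obtain ⟨i, hi, i', hi', hne⟩ := h1'
      exact two_lines i i' hne p hi hi'
    · rintro ⟨j, rfl⟩
      show 2 ≤ A.mult (SP j)
      rw [multEq, hSPcount j, Set.ncard_coe_finset]
      exact hge2 j
  -- the vertex equivalence
  let eP : Fin 7 ≃ ↥A.sing := (Equiv.ofInjective SP SP_inj).trans (Equiv.setCongr sing_eq.symm)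
  have heP' : ∀ p : ↥A.sing, SP (eP.symm p) = (p : ProjPoint) := by
    intro p
    exact congrArg Subtype.val (eP.apply_symm_apply p)
  let σe : Fin 6 ≃ Fin 6 := Equiv.ofBijective σ hσbij
  let e : (↥A.sing ⊕ Fin 6) ≃ (Fin 7 ⊕ Fin 6) := Equiv.sumCongr eP.symm σe
  have hiso : ∀ v w, G6.Adj (e v) (e w) ↔ A.levi.Adj v w := by
    rintro (p | i) (q | j) <;>
      simp only [e, Equiv.sumCongr_apply, Sum.map_inl, Sum.map_inr]
    · exact iff_of_false (by simp [G6, adjB]) (fun h => h)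
    · show IM (eP.symm p) (σe j) = true ↔ ((p : ProjPoint) ∈ A.line j)
      rw [← mem_iff, heP' p, hσ j]
      exact Iff.rfl
    · show IM (eP.symm q) (σe i) = true ↔ ((q : ProjPoint) ∈ A.line i)
      rw [← mem_iff, heP' q, hσ i]
      exact Iff.rfl
    · exact iff_of_false (by simp [G6, adjB]) (fun h => h)
  let φ : A.levi ≃g G6 := { toEquiv := e, map_rel_iff' := fun {v w} => hiso v w }
  have key : ∀ n, HasInducedCycle A.levi n ↔ HasInducedCycle G6 n := by
    intro n
    constructor
    · rintro ⟨f⟩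
      exact ⟨f.trans φ.toRelEmbedding⟩
    · rintro ⟨f⟩
      exact ⟨f.trans φ.symm.toRelEmbedding⟩
  constructor
  · exact (key 8).2 ⟨emb8⟩
  · intro n hn h
    obtain ⟨f⟩ := (key n).1 h
    have h13 : n ≤ 13 := card13 f
    interval_cases n
    · exact absurd (parity (m := 7) f) (by norm_num)
    · obtain ⟨S, hS1, hS2⟩ := bridge (by norm_num) f
      exact no1012 S (Or.inl hS1) hS2
    · exact absurd (parity (m := 9) f) (by norm_num)
    · obtain ⟨S, hS1, hS2⟩ := bridge (by norm_num) f
      exact no1012 S (Or.inr hS1) hS2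
    · exact absurd (parity (m := 11) f) (by norm_num)
end
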